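/- If y and z are conditionally independent given x under q, and p(x,y|z) = p(y|z)·p(x|y,z), then the ELBO decomposes as log p(x,y) ≥ −D_KL(q(z|x) ‖ p(z)) + E_{q(z|x)}[log p(x|y,z)] + E_{q(z|x)}[log p(y|z)]. -/

import Mathlib

open Finset

lemma elbo_aux {γ : Type*} [Fintype γ] [Nonempty γ]
    (P q : γ → ℝ) (hP : ∀ z, 0 < P z) (hq : ∀ z, 0 < q z) (hqs : ∑ z, q z = 1) :
    ∑ z, q z * Real.log (P z / q z) ≤ Real.log (∑ z, P z) := by
  have hS : 0 < ∑ z, P z := Finset.sum_pos (fun z _ => hP z) Finset.univ_nonempty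
  set S := ∑ z, P z with hSdef
  have key : ∀ z, q z * Real.log (P z / q z) ≤ q z * (P z / S / q z - 1) + q z * Real.log S := by
    intro z
    have hPz := hP z; have hqz := hq z
    have h1 : Real.log (P z / q z) = Real.log (P z / S / q z) + Real.log S := by
      rw [← Real.log_mul (by positivity) (ne_of_gt hS)]
      ring_nf
      rw [mul_assoc, mul_inv_cancel₀ (ne_of_gt hS), mul_one]
    rw [h1, mul_add]
    gcongr
    exact Real.log_le_sub_one_of_pos (by positivity)
  calc ∑ z, q z * Real.log (P z / q z)
      ≤ ∑ z, (q z * (P z / S / q z - 1) + q z * Real.log S) :=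
        Finset.sum_le_sum (fun z _ => key z)
    _ = Real.log S := by
        rw [Finset.sum_add_distrib, ← Finset.sum_mul, hqs, one_mul]
        have : ∑ z, q z * (P z / S / q z - 1) = (∑ z, P z) / S - ∑ z, q z := by
          rw [Finset.sum_div, ← Finset.sum_sub_distrib]
          congr 1; ext z
          have hPz := hP z; have hqz := hq z
          field_simp
        rw [this, hqs, div_self (ne_of_gt hS)]
        ring

/-- Decomposed ELBO: if `q(z|x,y) = q(z|x)` (conditional independence of `y` and `z`
given `x` under `q`) and `p(x,y|z) = p(y|z)·p(x|y,z)`, then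
`log p(x,y) ≥ −D_KL(q(z|x)‖p(z)) + E_{q(z|x)}[log p(x|y,z)] + E_{q(z|x)}[log p(y|z)]`. -/
theorem elbo_decomposed_bound
    {γ : Type*} [Fintype γ] [Nonempty γ]
    (pz py_z px_yz qzx qzxy : γ → ℝ)
    (hpz : ∀ z, 0 < pz z) (hpy : ∀ z, 0 < py_z z) (hpx : ∀ z, 0 < px_yz z)
    (hq : ∀ z, 0 < qzx z)
    (hpzs : ∑ z, pz z = 1) (hqs : ∑ z, qzx z = 1)
    (hci : qzxy = qzx) :    -- conditional independence: q(z|x,y) = q(z|x)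
    let pxy : ℝ := ∑ z, pz z * (py_z z * px_yz z)   -- p(x,y|z) = p(y|z)·p(x|y,z)
    Real.log pxy
      ≥ -(∑ z, qzx z * Real.log (qzx z / pz z))
        + (∑ z, qzx z * Real.log (px_yz z))
        + (∑ z, qzx z * Real.log (py_z z)) := by
  intro pxy
  have h := elbo_aux (fun z => pz z * (py_z z * px_yz z)) qzx
    (fun z => mul_pos (hpz z) (mul_pos (hpy z) (hpx z))) hq hqs
  have heq : ∑ z, qzx z * Real.log (pz z * (py_z z * px_yz z) / qzx z)
      = -(∑ z, qzx z * Real.log (qzx z / pz z))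
        + (∑ z, qzx z * Real.log (px_yz z))
        + (∑ z, qzx z * Real.log (py_z z)) := by
    rw [← Finset.sum_neg_distrib, ← Finset.sum_add_distrib, ← Finset.sum_add_distrib]
    congr 1; ext z
    have h1 := hpz z; have h2 := hpy z; have h3 := hpx z; have h4 := hq z
    rw [Real.log_div (by positivity) (ne_of_gt h4),
        Real.log_mul (ne_of_gt h1) (by positivity),
        Real.log_mul (ne_of_gt h2) (ne_of_gt h3),
        Real.log_div (ne_of_gt h4) (ne_of_gt h1)]
    ring
  rw [heq] at h
  exact h
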